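/- Let A be a commutative Noetherian ring, X a set, R = A[X], and G a group of permutations of X. If the monoid X^⋄ of monomials admits a term ordering that is lovely for G, then every G-invariant ideal I of R is finitely generated as an R[G]-module; that is, there exists a finite set B ⊆ I such that I equals the ideal of R generated by {σb : σ ∈ G, b ∈ B}. -/

import Mathlib

/-- A quasi-ordering (here: any binary relation) `r` on `S` is a well-quasi-ordering if
every infinite sequence is good, i.e. there are `i < j` with `r (f i) (f j)`. -/
def IsWQO {S : Type*} (r : S → S → Prop) : Prop :=
  ∀ f : ℕ → S, ∃ i j : ℕ, i < j ∧ r (f i) (f j)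

/-- A term ordering of the monoid of monomials `X →₀ ℕ`: a linear order which is
well-founded, with `1 ≤ x` for every indeterminate `x`, and compatible with
multiplication by indeterminates. -/
def IsTermOrder {X : Type*} (r : (X →₀ ℕ) → (X →₀ ℕ) → Prop) : Prop :=
  IsLinearOrder (X →₀ ℕ) r ∧
  WellFounded (fun v w : X →₀ ℕ => r v w ∧ v ≠ w) ∧
  (∀ x : X, r 0 (Finsupp.single x 1)) ∧
  (∀ (v w : X →₀ ℕ) (x : X), r v w → r (Finsupp.single x 1 + v) (Finsupp.single x 1 + w))

/-- The symmetric cancellation ordering corresponding to a permutation group `G` on `X`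
and a term ordering `r` of the monomials `X →₀ ℕ`:  `v ⪯ w` iff `r v w` and there are
`σ ∈ G` and a monomial `u` with `w = u·σv` and `u·σv' ≤ w` for every `v' ≤ v`. -/
def SymCancel {X : Type*} (G : Subgroup (Equiv.Perm X))
    (r : (X →₀ ℕ) → (X →₀ ℕ) → Prop) (v w : X →₀ ℕ) : Prop :=
  r v w ∧ ∃ σ : Equiv.Perm X, σ ∈ G ∧ ∃ u : X →₀ ℕ,
    w = u + Finsupp.mapDomain (⇑σ) v ∧
    ∀ v' : X →₀ ℕ, r v' v → r (u + Finsupp.mapDomain (⇑σ) v') w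

/-- The lexicographic ordering of monomials induced by a linear order on `X`:
`v ≤lex w` iff `v = w` or there is `x` with `v x < w x` and `v y = w y` for all `y > x`. -/
def LexLe {X : Type*} [LinearOrder X] (v w : X →₀ ℕ) : Prop :=
  v = w ∨ ∃ x : X, v x < w x ∧ ∀ y : X, x < y → v y = w y

namespace Stmt1Aux

variable {X : Type*} {r : (X →₀ ℕ) → (X →₀ ℕ) → Prop}

lemma termOrder_refl (hr : IsTermOrder r) (v : X →₀ ℕ) : r v v := by
  haveI := hr.1; exact refl_of r v

lemma termOrder_trans (hr : IsTermOrder r) {a b c : X →₀ ℕ} (h1 : r a b) (h2 : r b c) :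
    r a c := by
  haveI := hr.1; exact _root_.trans h1 h2

lemma termOrder_total (hr : IsTermOrder r) (a b : X →₀ ℕ) : r a b ∨ r b a := by
  haveI := hr.1; exact total_of r a b

lemma exists_rmax (hr : IsTermOrder r) (s : Finset (X →₀ ℕ)) (hs : s.Nonempty) :
    ∃ m ∈ s, ∀ v ∈ s, r v m := by
  classical
  induction s using Finset.induction_on with
  | empty => simp at hs
  | @insert x s hx ih =>
    rcases s.eq_empty_or_nonempty with rfl | hs'
    · exact ⟨x, Finset.mem_insert_self _ _, by
        intro v hv
        simp only [Finset.mem_insert, Finset.notMem_empty, or_false] at hv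
        subst hv; exact termOrder_refl hr _⟩
    · obtain ⟨m, hm, hmax⟩ := ih hs'
      rcases termOrder_total hr x m with h | h
      · refine ⟨m, Finset.mem_insert_of_mem hm, ?_⟩
        intro v hv
        rcases Finset.mem_insert.1 hv with rfl | hv
        exacts [h, hmax v hv]
      · refine ⟨x, Finset.mem_insert_self _ _, ?_⟩
        intro v hv
        rcases Finset.mem_insert.1 hv with rfl | hv
        exacts [termOrder_refl hr v, termOrder_trans hr (hmax v hv) h]

lemma symCancel_trans {G : Subgroup (Equiv.Perm X)} (hr : IsTermOrder r) {a b c : X →₀ ℕ}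
    (h1 : SymCancel G r a b) (h2 : SymCancel G r b c) : SymCancel G r a c := by
  obtain ⟨hab, σ, hσ, u, hb, hu⟩ := h1
  obtain ⟨hbc, τ, hτ, u', hc, hu'⟩ := h2
  refine ⟨termOrder_trans hr hab hbc, τ * σ, mul_mem hτ hσ, u' + Finsupp.mapDomain (⇑τ) u, ?_, ?_⟩
  · rw [hc, hb, Finsupp.mapDomain_add, add_assoc, Equiv.Perm.coe_mul, Finsupp.mapDomain_comp]
  · intro v' hv'
    have h3 := hu' _ (hu v' hv')
    rw [add_assoc, Equiv.Perm.coe_mul, Finsupp.mapDomain_comp, ← Finsupp.mapDomain_add]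
    exact h3

lemma nat_rec_exists {α : Type*} (a : α) (g : α → α) :
    ∃ f : ℕ → α, f 0 = a ∧ ∀ n, f (n + 1) = g (f n) :=
  ⟨fun n => Nat.rec a (fun _ p => g p) n, rfl, fun _ => rfl⟩

lemma exists_chain {S : Type*} {q : S → S → Prop}
    (htr : ∀ {a b c}, q a b → q b c → q a c) (hq : IsWQO q) (s : ℕ → S) :
    ∃ φ : ℕ → ℕ, StrictMono φ ∧ ∀ i j : ℕ, i < j → q (s (φ i)) (s (φ j)) := by
  classical
  have hTfin : {i : ℕ | ∀ j, i < j → ¬ q (s i) (s j)}.Finite := by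
    by_contra hinf
    obtain ⟨a, b, hab, hgood⟩ := hq fun n => s (Nat.nth (· ∈ {i : ℕ | ∀ j, i < j → ¬ q (s i) (s j)}) n)
    have hmem := Nat.nth_mem_of_infinite (p := (· ∈ {i : ℕ | ∀ j, i < j → ¬ q (s i) (s j)})) hinf a
    exact hmem _ ((Nat.nth_lt_nth hinf).2 hab) hgood
  obtain ⟨N, hN⟩ := hTfin.bddAbove
  have hstep : ∀ i, N < i → ∃ j, i < j ∧ q (s i) (s j) := by
    intro i hi
    by_contra h
    push_neg at h
    exact absurd (hN (fun j hj hq' => h j hj hq')) (not_le.2 hi)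
  choose nxt hlt hq2 using hstep
  obtain ⟨ψ, hψ0, hψs⟩ := nat_rec_exists (⟨N + 1, Nat.lt_succ_self N⟩ : {i : ℕ // N < i})
    (fun p => ⟨nxt p.1 p.2, lt_trans p.2 (hlt p.1 p.2)⟩)
  refine ⟨fun n => (ψ n).1, ?_, ?_⟩
  · apply strictMono_nat_of_lt_succ
    intro n
    rw [hψs]
    exact hlt _ _
  · have hsucc : ∀ n, q (s (ψ n).1) (s (ψ (n + 1)).1) := by
      intro n; rw [hψs]; exact hq2 _ _
    intro i j hij
    induction j, hij using Nat.le_induction with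
    | base => exact hsucc i
    | succ j hij ih => exact htr ih (hsucc j)



open MvPolynomial

variable {X : Type*} {r : (X →₀ ℕ) → (X →₀ ℕ) → Prop} {A : Type*} [CommRing A]

noncomputable def LMon (hr : IsTermOrder r) (f : MvPolynomial X A) : X →₀ ℕ :=
  if h : f.support.Nonempty then (exists_rmax hr f.support h).choose else 0

lemma LMon_mem (hr : IsTermOrder r) {f : MvPolynomial X A} (hf : f.support.Nonempty) :
    LMon hr f ∈ f.support := by
  rw [LMon, dif_pos hf]
  exact (exists_rmax hr f.support hf).choose_spec.1

lemma LMon_max (hr : IsTermOrder r) {f : MvPolynomial X A} {m : X →₀ ℕ}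
    (hm : m ∈ f.support) : r m (LMon hr f) := by
  have hf : f.support.Nonempty := ⟨m, hm⟩
  rw [LMon, dif_pos hf]
  exact (exists_rmax hr f.support hf).choose_spec.2 m hm

lemma exists_seq {α : Type*} [DecidableEq α] (P : Finset α → α → Prop)
    (h : ∀ B : Finset α, ∃ g, P B g) :
    ∃ (B : ℕ → Finset α) (f : ℕ → α), B 0 = ∅ ∧ (∀ n, B (n + 1) = insert (f n) (B n)) ∧
      ∀ n, P (B n) (f n) := by
  choose F hF using h
  obtain ⟨Bf, h0, hs⟩ := nat_rec_exists ((∅ : Finset α), F ∅)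
    (fun p => (insert p.2 p.1, F (insert p.2 p.1)))
  refine ⟨fun n => (Bf n).1, fun n => (Bf n).2, by show (Bf 0).1 = ∅; rw [h0],
    fun n => by show (Bf (n+1)).1 = insert (Bf n).2 (Bf n).1; rw [hs], fun n => ?_⟩
  show P (Bf n).1 (Bf n).2
  cases n with
  | zero => rw [h0]; exact hF ∅
  | succ n => rw [hs]; exact hF _

/-- The key reduction lemma: subtracting suitable multiples of renamed polynomials kills
the leading monomial, and every remaining monomial is strictly below `w`. -/
lemma reduction (hr : IsTermOrder r) {n : ℕ} (f : MvPolynomial X A)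
    (g : Fin n → MvPolynomial X A) (c : Fin n → A) (σ : Fin n → Equiv.Perm X)
    (u : Fin n → (X →₀ ℕ)) (w : X →₀ ℕ) (hw : w = LMon hr f)
    (hwitEq : ∀ k, w = u k + Finsupp.mapDomain (⇑(σ k)) (LMon hr (g k)))
    (hwit : ∀ k, ∀ v' : X →₀ ℕ, r v' (LMon hr (g k)) →
      r (u k + Finsupp.mapDomain (⇑(σ k)) v') w)
    (hc : MvPolynomial.coeff w f = ∑ k, c k * MvPolynomial.coeff (LMon hr (g k)) (g k)) :
    ∀ m ∈ (f - ∑ k, c k •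
        (MvPolynomial.monomial (u k) (1 : A) * MvPolynomial.rename (⇑(σ k)) (g k))).support,
      r m w ∧ m ≠ w := by
  classical
  set h : MvPolynomial X A := f - ∑ k, c k •
    (MvPolynomial.monomial (u k) (1 : A) * MvPolynomial.rename (⇑(σ k)) (g k)) with hh
  have hcoeff_term : ∀ k, MvPolynomial.coeff w
      (MvPolynomial.monomial (u k) (1 : A) * MvPolynomial.rename (⇑(σ k)) (g k)) =
      MvPolynomial.coeff (LMon hr (g k)) (g k) := by
    intro k
    rw [hwitEq k, coeff_monomial_mul, one_mul,
      coeff_rename_mapDomain _ (σ k).injective]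
  have hzero : MvPolynomial.coeff w h = 0 := by
    rw [hh, coeff_sub, coeff_sum, hc]
    rw [sub_eq_zero]
    refine Finset.sum_congr rfl fun k _ => ?_
    rw [coeff_smul, hcoeff_term k, smul_eq_mul]
  intro m hm
  have hmne : m ≠ w := by
    intro hmw
    rw [MvPolynomial.mem_support_iff, hmw, hzero] at hm
    exact hm rfl
  refine ⟨?_, hmne⟩
  have hsub := MvPolynomial.support_sub X f
    (∑ k, c k • (MvPolynomial.monomial (u k) (1 : A) * MvPolynomial.rename (⇑(σ k)) (g k))) hm
  rcases Finset.mem_union.1 hsub with hmf | hms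
  · exact hw ▸ LMon_max hr hmf
  · have := MvPolynomial.support_sum hms
    obtain ⟨k, _, hk⟩ := Finset.mem_biUnion.1 this
    have hk' := MvPolynomial.support_smul hk
    -- m ∈ support (monomial (u k) 1 * rename (σ k) (g k))
    have hcm : MvPolynomial.coeff m
        (MvPolynomial.monomial (u k) (1 : A) * MvPolynomial.rename (⇑(σ k)) (g k)) ≠ 0 :=
      MvPolynomial.mem_support_iff.1 hk'
    rw [MvPolynomial.coeff_monomial_mul'] at hcm
    by_cases hle : u k ≤ m
    · rw [if_pos hle, one_mul] at hcm
      obtain ⟨v, hv1, hv2⟩ := MvPolynomial.coeff_rename_ne_zero _ _ _ hcm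
      have hm_eq : m = u k + Finsupp.mapDomain (⇑(σ k)) v := by
        rw [hv1, add_tsub_cancel_of_le hle]
      rw [hm_eq]
      exact hwit k v (LMon_max hr (MvPolynomial.mem_support_iff.2 hv2))
    · rw [if_neg hle] at hcm
      exact absurd rfl hcm

end Stmt1Aux

open Stmt1Aux

/-- If the monomials admit a term ordering lovely for `G` (the
corresponding symmetric cancellation ordering is a wqo), then every `G`-invariant ideal
of `A[X]` (`A` commutative Noetherian) is finitely generated as an `A[X][G]`-module. -/
theorem stmt1 {A : Type*} [CommRing A] [IsNoetherianRing A] {X : Type*}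
    (G : Subgroup (Equiv.Perm X)) (r : (X →₀ ℕ) → (X →₀ ℕ) → Prop)
    (hr : IsTermOrder r) (hlovely : IsWQO (SymCancel G r))
    (I : Ideal (MvPolynomial X A))
    (hI : ∀ σ ∈ G, ∀ f ∈ I, MvPolynomial.rename (⇑σ) f ∈ I) :
    ∃ B : Finset (MvPolynomial X A), ↑B ⊆ (I : Set (MvPolynomial X A)) ∧
      I = Ideal.span {p : MvPolynomial X A |
        ∃ σ ∈ G, ∃ b ∈ B, p = MvPolynomial.rename (⇑σ) b} := by
  classical
  by_contra hcon
  push_neg at hcon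
  set R := MvPolynomial X A with hR
  let Sp : Finset R → Ideal R := fun B =>
    Ideal.span {p : R | ∃ σ ∈ G, ∃ b ∈ B, p = MvPolynomial.rename (⇑σ) b}
  have hSp_gen : ∀ (B : Finset R) (σ : Equiv.Perm X), σ ∈ G → ∀ b ∈ B,
      MvPolynomial.rename (⇑σ) b ∈ Sp B :=
    fun B σ hσ b hb => Ideal.subset_span ⟨σ, hσ, b, hb, rfl⟩
  have hSp_le : ∀ B : Finset R, ↑B ⊆ (I : Set R) → Sp B ≤ I := by
    intro B hB
    apply Ideal.span_le.2
    rintro p ⟨σ, hσ, b, hb, rfl⟩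
    exact hI σ hσ b (hB hb)
  -- choice of a minimal-leading-monomial element outside Sp B
  have hpick : ∀ B : Finset R, ∃ g : R, ↑B ⊆ (I : Set R) →
      g ∈ I ∧ g ∉ Sp B ∧ ∀ h' ∈ I, h' ∉ Sp B →
        ¬(r (LMon hr h') (LMon hr g) ∧ LMon hr h' ≠ LMon hr g) := by
    intro B
    by_cases hB : ↑B ⊆ (I : Set R)
    · have hlt : Sp B < I := lt_of_le_of_ne (hSp_le B hB) (Ne.symm (hcon B hB))
      obtain ⟨x, hxI, hxS⟩ := SetLike.exists_of_lt hlt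
      obtain ⟨m, hm, hmins⟩ := (hr.2.1).has_min
        {m | ∃ g : R, (g ∈ I ∧ g ∉ Sp B) ∧ m = LMon hr g} ⟨_, ⟨x, ⟨hxI, hxS⟩, rfl⟩⟩
      obtain ⟨g, hg, rfl⟩ := hm
      exact ⟨g, fun _ => ⟨hg.1, hg.2,
        fun h' hI' hS' hcontra => hmins _ ⟨h', ⟨hI', hS'⟩, rfl⟩ hcontra⟩⟩
    · exact ⟨0, fun h => absurd h hB⟩
  obtain ⟨B, f, hB0, hBs, hP⟩ := exists_seq _ hpick
  have hBI : ∀ n, ↑(B n) ⊆ (I : Set R) := by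
    intro n; induction n with
    | zero => rw [hB0]; simp
    | succ n ih =>
      rw [hBs n, Finset.coe_insert]
      exact Set.insert_subset ((hP n ih).1) ih
  have hfI : ∀ n, f n ∈ I := fun n => (hP n (hBI n)).1
  have hfS : ∀ n, f n ∉ Sp (B n) := fun n => (hP n (hBI n)).2.1
  have hmin : ∀ n, ∀ h' ∈ I, h' ∉ Sp (B n) →
      ¬(r (LMon hr h') (LMon hr (f n)) ∧ LMon hr h' ≠ LMon hr (f n)) :=
    fun n => (hP n (hBI n)).2.2
  have hmemB : ∀ i j : ℕ, i < j → f i ∈ B j := by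
    intro i j hij
    induction j, hij using Nat.le_induction with
    | base => rw [hBs]; exact Finset.mem_insert_self _ _
    | succ j hij ih => rw [hBs]; exact Finset.mem_insert_of_mem ih
  -- extract an ascending chain for the symmetric cancellation order
  obtain ⟨φ, hφ, hchain⟩ := exists_chain (q := SymCancel G r) (fun h1 h2 => symCancel_trans hr h1 h2)
    hlovely (fun n => LMon hr (f n))
  -- Noetherianity of A: stabilize the chain of leading coefficient ideals
  haveI hnoeth : IsNoetherian A A := isNoetherianRing_iff.mp inferInstance
  obtain ⟨N, hstab⟩ := monotone_stabilizes_iff_noetherian.mpr hnoeth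
    ⟨fun n => Ideal.span
        ((fun k => MvPolynomial.coeff (LMon hr (f (φ k))) (f (φ k))) '' Set.Iio n),
      fun a b hab => Ideal.span_mono (Set.image_mono (Set.Iio_subset_Iio hab))⟩
  have hLCN : MvPolynomial.coeff (LMon hr (f (φ N))) (f (φ N)) ∈ Ideal.span
      ((fun k => MvPolynomial.coeff (LMon hr (f (φ k))) (f (φ k))) '' Set.Iio N) := by
    have h1 : MvPolynomial.coeff (LMon hr (f (φ N))) (f (φ N)) ∈ Ideal.span
        ((fun k => MvPolynomial.coeff (LMon hr (f (φ k))) (f (φ k))) '' Set.Iio (N + 1)) :=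
      Ideal.subset_span ⟨N, Nat.lt_succ_self N, rfl⟩
    have h2 := hstab (N + 1) (Nat.le_succ N)
    change Ideal.span _ = Ideal.span _ at h2
    rwa [← h2] at h1
  have himg : ((fun k => MvPolynomial.coeff (LMon hr (f (φ k))) (f (φ k))) '' Set.Iio N)
      = Set.range (fun k : Fin N => MvPolynomial.coeff (LMon hr (f (φ k))) (f (φ k))) := by
    ext a; constructor
    · rintro ⟨k, hk, rfl⟩; exact ⟨⟨k, hk⟩, rfl⟩
    · rintro ⟨k, rfl⟩; exact ⟨k, k.2, rfl⟩
  rw [himg] at hLCN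
  obtain ⟨c, hc⟩ := (Submodule.mem_span_range_iff_exists_fun A).1 hLCN
  -- witnesses from the symmetric cancellation relations
  have hsc : ∀ k : Fin N, SymCancel G r (LMon hr (f (φ k))) (LMon hr (f (φ N))) :=
    fun k => hchain k N k.2
  simp only [SymCancel] at hsc
  choose hr1 σ hσ u hEq hWit using hsc
  -- the reduced polynomial
  have hred := reduction hr (f (φ N)) (fun k : Fin N => f (φ k)) c σ u
    (LMon hr (f (φ N))) rfl hEq hWit (by
      rw [← hc]
      exact (Finset.sum_congr rfl fun k _ => smul_eq_mul (α := A) _ _).symm)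
  set g : R := f (φ N) - ∑ k : Fin N, c k •
    (MvPolynomial.monomial (u k) (1 : A) * MvPolynomial.rename (⇑(σ k)) (f (φ k))) with hg
  have hgI : g ∈ I := by
    refine I.sub_mem (hfI _) (Submodule.sum_mem I fun k _ => ?_)
    exact Submodule.smul_of_tower_mem I (c k)
      (Ideal.mul_mem_left _ _ (hI (σ k) (hσ k) _ (hfI _)))
  have hsum_mem : (∑ k : Fin N, c k •
      (MvPolynomial.monomial (u k) (1 : A) * MvPolynomial.rename (⇑(σ k)) (f (φ k))))
        ∈ Sp (B (φ N)) := by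
    refine Submodule.sum_mem _ fun k _ => ?_
    exact Submodule.smul_of_tower_mem _ (c k)
      (Ideal.mul_mem_left _ _ (hSp_gen _ (σ k) (hσ k) _ (hmemB _ _ (hφ k.2))))
  have hgS : g ∉ Sp (B (φ N)) := by
    intro hgmem
    apply hfS (φ N)
    have h3 := Submodule.add_mem _ hgmem hsum_mem
    rwa [hg, sub_add_cancel] at h3
  have hg0 : g ≠ 0 := fun h => hgS (h ▸ Submodule.zero_mem _)
  have hgsupp : g.support.Nonempty :=
    Finset.nonempty_iff_ne_empty.2 fun h => hg0 (MvPolynomial.support_eq_empty.1 h)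
  exact hmin (φ N) g hgI hgS (hred _ (LMon_mem hr hgsupp))
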